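/- Let ν > 0, let F ∈ ℂ with Re(F) < 0 and let f_j : ℝ^d → ℝ be Fourier-transformable. Consider (i) the function whose Fourier–Laplace transform is μ^{ν-j-1} Ff_j(γ)/(μ^ν - F(γ)) (the solution of the space-time fractional problem with only the j-th initial condition f_j nonzero), and (ii) the stochastic composition of u₁ with Fourier transform Ff_j(γ) e^{tF(γ)} (solution of the first-order space problem with initial datum f_j) and u₂ with t-Laplace transform μ^{ν-j-1} e^{-μ^ν x} (solution of the time problem with boundary datum h, Lh(μ) = μ^{ν-j-1}, and zero initial conditions). Then the Fourier–Laplace transforms of (i) and (ii) coincide for all μ > 0, γ ∈ ℝ^d. -/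

import Mathlib

open MeasureTheory Set Filter

private lemma integral_cexp_mul_Ioi_aux {c : ℂ} (hc : c.re < 0) :
    ∫ s in Ioi (0:ℝ), Complex.exp (c * s) = -1 / c := by
  have hc0 : c ≠ 0 := fun h => by simp [h] at hc
  have hderiv : ∀ x ∈ Ioi (0:ℝ),
      HasDerivAt (fun x : ℝ => Complex.exp (c * x) / c) (Complex.exp (c * x)) x := by
    intro x _
    have h1 : HasDerivAt (fun z : ℂ => Complex.exp (c * z) / c) (Complex.exp (c * x)) (x : ℂ) := by
      have h2 : HasDerivAt (fun z : ℂ => Complex.exp (c * z)) (Complex.exp (c * x) * c) (x : ℂ) := by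
        simpa [mul_comm, Function.comp_def] using (Complex.hasDerivAt_exp (c * x)).comp (x : ℂ)
          ((hasDerivAt_id (x : ℂ)).const_mul c)
      simpa [mul_div_cancel_right₀ _ hc0] using h2.div_const c
    exact h1.comp_ofReal
  have hcont : ContinuousOn (fun x : ℝ => Complex.exp (c * x) / c) (Ici 0) :=
    (Continuous.div_const (Complex.continuous_exp.comp (by fun_prop)) c).continuousOn
  have hint : IntegrableOn (fun x : ℝ => Complex.exp (c * x)) (Ioi 0) := by
    refine Integrable.mono' (g := fun x : ℝ => Real.exp (-(-c.re) * x))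
      (exp_neg_integrableOn_Ioi 0 (by linarith)) ?_ ?_
    · exact (Complex.continuous_exp.comp (by fun_prop)).aestronglyMeasurable
    · filter_upwards with x
      simp [Complex.norm_exp]
  have htend : Tendsto (fun x : ℝ => Complex.exp (c * x) / c) atTop (nhds 0) := by
    rw [tendsto_zero_iff_norm_tendsto_zero]
    have : (fun x : ℝ => ‖Complex.exp (c * x) / c‖) =
        fun x : ℝ => Real.exp (c.re * x) / ‖c‖ := by
      ext x; simp [Complex.norm_exp]
    rw [this]
    have : Tendsto (fun x : ℝ => Real.exp (c.re * x)) atTop (nhds 0) := by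
      apply Real.tendsto_exp_atBot.comp
      exact Tendsto.const_mul_atTop_of_neg hc tendsto_id
    simpa using this.div_const ‖c‖
  have := integral_Ioi_of_hasDerivAt_of_tendsto (hcont 0 self_mem_Ici) hderiv hint htend
  simpa [neg_div] using this

theorem stochastic_composition_case_a
    (d : ℕ) (ν : ℝ) (hν : 0 < ν) (j : ℕ) (hj : j < ⌈ν⌉₊)
    (F : (Fin d → ℝ) → ℂ) (hF : ∀ γ, (F γ).re < 0)
    (fj : (Fin d → ℝ) → ℂ)
    -- `Fu₁ s γ` is the Fourier transform of the solution of the space problem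
    (Fu₁ : ℝ → (Fin d → ℝ) → ℂ)
    (hu₁ : ∀ s : ℝ, 0 ≤ s → ∀ γ, Fu₁ s γ = fj γ * Complex.exp (s * F γ))
    -- `u₂` is the solution of the time problem with `Lh(μ) = μ^{ν-j-1}`
    (u₂ : ℝ → ℝ → ℝ) (hmeas : Measurable (Function.uncurry u₂))
    (hu₂ : ∀ μ : ℝ, 0 < μ → ∀ s : ℝ, 0 ≤ s →
      ∫ t in Ioi (0:ℝ), Real.exp (-μ * t) * u₂ t s =
        μ ^ (ν - j - 1) * Real.exp (-(μ ^ ν) * s))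
    (hFub : ∀ μ : ℝ, 0 < μ → ∀ γ,
      IntegrableOn (fun p : ℝ × ℝ =>
          Complex.exp (-(μ : ℂ) * p.1) * Fu₁ p.2 γ * (u₂ p.1 p.2 : ℂ))
        ((Ioi (0:ℝ)) ×ˢ (Ioi (0:ℝ)))) :
    ∀ μ : ℝ, 0 < μ → ∀ γ,
      ∫ t in Ioi (0:ℝ), Complex.exp (-(μ : ℂ) * t) *
          ∫ s in Ioi (0:ℝ), Fu₁ s γ * (u₂ t s : ℂ) =
        ((μ ^ (ν - j - 1) : ℝ) : ℂ) * fj γ / (((μ ^ ν : ℝ) : ℂ) - F γ) := by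
  intro μ hμ γ
  have hμν : (0:ℝ) < μ ^ ν := Real.rpow_pos_of_pos hμ ν
  have hre : ((F γ) - ((μ ^ ν : ℝ) : ℂ)).re < 0 := by
    simp only [Complex.sub_re, Complex.ofReal_re]
    linarith [hF γ]
  have hprod : Integrable (fun p : ℝ × ℝ =>
      Complex.exp (-(μ : ℂ) * p.1) * Fu₁ p.2 γ * (u₂ p.1 p.2 : ℂ))
      ((volume.restrict (Ioi (0:ℝ))).prod (volume.restrict (Ioi (0:ℝ)))) := by
    rw [Measure.prod_restrict]
    exact hFub μ hμ γ
  calc ∫ t in Ioi (0:ℝ), Complex.exp (-(μ : ℂ) * t) *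
          ∫ s in Ioi (0:ℝ), Fu₁ s γ * (u₂ t s : ℂ)
      = ∫ t in Ioi (0:ℝ), ∫ s in Ioi (0:ℝ),
          Complex.exp (-(μ : ℂ) * t) * Fu₁ s γ * (u₂ t s : ℂ) := by
        refine setIntegral_congr_fun measurableSet_Ioi fun t _ => ?_
        rw [← integral_const_mul]
        simp_rw [mul_assoc]
    _ = ∫ s in Ioi (0:ℝ), ∫ t in Ioi (0:ℝ),
          Complex.exp (-(μ : ℂ) * t) * Fu₁ s γ * (u₂ t s : ℂ) :=
        integral_integral_swap hprod
    _ = ∫ s in Ioi (0:ℝ), Fu₁ s γ *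
          ((μ ^ (ν - j - 1) * Real.exp (-(μ ^ ν) * s) : ℝ) : ℂ) := by
        refine setIntegral_congr_fun measurableSet_Ioi fun s hs => ?_
        have h1 : ∫ t in Ioi (0:ℝ),
            Complex.exp (-(μ : ℂ) * t) * Fu₁ s γ * (u₂ t s : ℂ) =
            Fu₁ s γ * ∫ t in Ioi (0:ℝ), Complex.exp (-(μ : ℂ) * t) * (u₂ t s : ℂ) := by
          rw [← integral_const_mul]
          congr 1; ext t; ring
        rw [h1]
        congr 1
        have h2 : ∫ t in Ioi (0:ℝ), Complex.exp (-(μ : ℂ) * t) * (u₂ t s : ℂ) =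
            ((∫ t in Ioi (0:ℝ), Real.exp (-μ * t) * u₂ t s : ℝ) : ℂ) := by
          rw [show (∫ t in Ioi (0:ℝ), Complex.exp (-(μ : ℂ) * t) * (u₂ t s : ℂ)) =
              ∫ t in Ioi (0:ℝ), ((Real.exp (-μ * t) * u₂ t s : ℝ) : ℂ) from
            setIntegral_congr_fun measurableSet_Ioi fun t _ => by
              push_cast [Complex.ofReal_exp]; ring_nf]
          exact integral_ofReal
        rw [h2, hu₂ μ hμ s (le_of_lt hs)]
    _ = ∫ s in Ioi (0:ℝ), ((μ ^ (ν - j - 1) : ℝ) : ℂ) * fj γ *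
          Complex.exp ((F γ - ((μ ^ ν : ℝ) : ℂ)) * s) := by
        refine setIntegral_congr_fun measurableSet_Ioi fun s hs => ?_
        rw [hu₁ s (le_of_lt hs) γ,
          show ((F γ - ((μ ^ ν : ℝ) : ℂ)) * s) = s * F γ + ((-(μ ^ ν) * s : ℝ) : ℂ) by
            push_cast; ring,
          Complex.exp_add]
        push_cast [Complex.ofReal_exp]
        ring
    _ = ((μ ^ (ν - j - 1) : ℝ) : ℂ) * fj γ *
          (-1 / ((F γ) - ((μ ^ ν : ℝ) : ℂ))) := by
        rw [integral_const_mul, integral_cexp_mul_Ioi_aux hre]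
    _ = ((μ ^ (ν - j - 1) : ℝ) : ℂ) * fj γ / (((μ ^ ν : ℝ) : ℂ) - F γ) := by
        rw [neg_div, ← div_neg, neg_sub]
        ring
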